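/- Let G be an edge-weighted complete bipartite graph between agents [n] and goods [m] with m ≥ n, where the weight of edge (i,g) is v_i(g) ≥ 0. For each agent i, let G_i be a set of n goods maximizing ∑_{g ∈ G_i} v_i(g) over all n-element subsets of goods. Then there exists a matching π assigning a distinct good π(i) to each agent i such that ∑_{i∈[n]} v_i(π(i)) ≥ (1/n) ∑_{i∈[n]} ∑_{g ∈ G_i} v_i(g). -/

import Mathlib

open Finset

/-- In a weighted complete bipartite graph between agents [n] and goods [m]
(m ≥ n) with nonnegative weights `v i g`, if `G i` is a set of `n` goods maximizing
agent `i`'s total value among all `n`-element subsets, then there is a matching `π`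
(an injective assignment of distinct goods to agents) with total weight at least
(1/n)·∑_i ∑_{g ∈ G i} v i g. -/
theorem exists_matching_welfare_ge_avg_top_n
    (n m : ℕ) (hn : 0 < n) (hm : n ≤ m)
    (v : Fin n → Fin m → ℝ) (hv : ∀ i g, 0 ≤ v i g)
    (G : Fin n → Finset (Fin m))
    (hGcard : ∀ i, (G i).card = n)
    (hGmax : ∀ i, ∀ S : Finset (Fin m), S.card = n →
      ∑ g ∈ S, v i g ≤ ∑ g ∈ G i, v i g) :
    ∃ π : Fin n → Fin m, Function.Injective π ∧
      (1 / (n : ℝ)) * ∑ i, ∑ g ∈ G i, v i g ≤ ∑ i, v i (π i) := by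
  classical
  set k := m - n with hk
  have hmk : n + k = m := by omega
  let e : (Fin n ⊕ Fin k) ≃ Fin m := finSumFinEquiv.trans (finCongr hmk)
  set d : Fin m → ℕ := fun g => (univ.filter (fun i => g ∈ G i)).card with hd
  have hn' : (n : ℝ) ≠ 0 := Nat.cast_ne_zero.mpr hn.ne'
  have hdle : ∀ g, (d g : ℝ) ≤ n := by
    intro g
    exact_mod_cast le_trans (card_filter_le _ _) (by simp)
  have hdsum : ∑ g : Fin m, (d g : ℝ) = (n : ℝ) * n := by
    have h1 : ∑ g : Fin m, (d g : ℝ) = ∑ g : Fin m, ∑ i : Fin n,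
        (if g ∈ G i then (1:ℝ) else 0) := by
      refine Finset.sum_congr rfl fun g _ => ?_
      rw [Finset.sum_boole]
    rw [h1, Finset.sum_comm]
    have h2 : ∀ i : Fin n, ∑ g : Fin m, (if g ∈ G i then (1:ℝ) else 0) = n := by
      intro i
      rw [Finset.sum_ite_mem, univ_inter, Finset.sum_const, hGcard]
      simp
    rw [Finset.sum_congr rfl fun i _ => h2 i]
    simp [mul_comm]
  -- the doubly stochastic matrix
  set M : Matrix (Fin n ⊕ Fin k) (Fin n ⊕ Fin k) ℝ := fun x a =>
    Sum.rec (fun i => if e a ∈ G i then 1/(n:ℝ) else 0)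
            (fun _ => (1 - (d (e a) : ℝ)/n) / k) x with hMdef
  have rowsum1 : ∀ i : Fin n, ∑ a, M (Sum.inl i) a = 1 := by
    intro i
    have h1 := Fintype.sum_equiv e (fun a => M (Sum.inl i) a)
      (fun g => if g ∈ G i then 1/(n:ℝ) else 0) (fun a => rfl)
    rw [h1, Finset.sum_ite_mem, univ_inter, Finset.sum_const, hGcard]
    simp [hn']
  have colfirst : ∀ a, ∑ i : Fin n, M (Sum.inl i) a = (d (e a) : ℝ)/n := by
    intro a
    show ∑ i : Fin n, (if e a ∈ G i then 1/(n:ℝ) else 0) = _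
    have h1 : ∀ i : Fin n, (if e a ∈ G i then 1/(n:ℝ) else 0)
        = (if e a ∈ G i then (1:ℝ) else 0) * (1/n) := by
      intro i; split <;> simp
    rw [Finset.sum_congr rfl fun i _ => h1 i, ← Finset.sum_mul, Finset.sum_boole]
    simp [hd, div_eq_mul_inv]
  have hM : M ∈ doublyStochastic ℝ (Fin n ⊕ Fin k) := by
    rw [mem_doublyStochastic_iff_sum]
    refine ⟨?_, ?_, ?_⟩
    · rintro (i | j) a
      · show (0:ℝ) ≤ if e a ∈ G i then 1/(n:ℝ) else 0
        positivity
      · show (0:ℝ) ≤ (1 - (d (e a) : ℝ)/n) / k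
        have h1 : (d (e a) : ℝ)/n ≤ 1 := by
          rw [div_le_one (by positivity)]; exact hdle (e a)
        have h2 : (0:ℝ) ≤ 1 - (d (e a) : ℝ)/n := by linarith
        positivity
    · rintro (i | j)
      · exact rowsum1 i
      · have hkpos : 0 < k := j.pos
        have hk' : (k : ℝ) ≠ 0 := Nat.cast_ne_zero.mpr hkpos.ne'
        have h1 := Fintype.sum_equiv e (fun a => M (Sum.inr j) a)
          (fun g => (1 - (d g : ℝ)/n) / k) (fun a => rfl)
        rw [h1, ← Finset.sum_div, Finset.sum_sub_distrib, ← Finset.sum_div,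
          hdsum, Finset.sum_const, Finset.card_univ]
        have hm' : (m : ℝ) = n + k := by exact_mod_cast hmk.symm
        simp only [Fintype.card_fin, nsmul_eq_mul, mul_one]
        rw [hm']
        field_simp
        ring
    · intro a
      rw [Fintype.sum_sum_type, colfirst a]
      rcases Nat.eq_zero_or_pos k with hk0 | hkpos
      · have hGuniv : ∀ i, G i = univ := by
          intro i
          apply Finset.eq_univ_of_card
          rw [hGcard]; simp; omega
        have hda : d (e a) = n := by
          simp [hd, hGuniv]
        rw [hda]
        have huniv : (univ : Finset (Fin k)) = ∅ := by
          apply Finset.eq_empty_of_forall_notMem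
          intro j; exact absurd j.pos (by omega)
        rw [huniv]
        simp [hn']
      · have hk' : (k : ℝ) ≠ 0 := Nat.cast_ne_zero.mpr hkpos.ne'
        rw [Finset.sum_const, Finset.card_univ]
        simp only [Fintype.card_fin, nsmul_eq_mul]
        show (d (e a) : ℝ)/n + (k : ℝ) * ((1 - (d (e a) : ℝ)/n) / k) = 1
        field_simp
        ring
  obtain ⟨w, hw0, hw1, hw2⟩ := exists_eq_sum_perm_of_mem_doublyStochastic hM
  -- the value of a permutation
  set f : Equiv.Perm (Fin n ⊕ Fin k) → ℝ :=
    fun σ => ∑ i : Fin n, v i (e (σ (Sum.inl i))) with hf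
  have key : ∑ σ, w σ * f σ = (1 / (n : ℝ)) * ∑ i, ∑ g ∈ G i, v i g := by
    have hMentry : ∀ x a, M x a = ∑ σ : Equiv.Perm _, w σ *
        (if σ x = a then 1 else 0) := by
      intro x a
      have h1 := congrFun (congrFun hw2 x) a
      rw [← h1]
      simp [Equiv.Perm.permMatrix, Matrix.sum_apply, Matrix.smul_apply,
        PEquiv.toMatrix_apply, Equiv.toPEquiv_apply, mul_ite]
    have lhs_eq : ∑ i : Fin n, ∑ a, M (Sum.inl i) a * v i (e a)
        = ∑ σ, w σ * f σ := by
      have h2 : ∀ i : Fin n, ∑ a, M (Sum.inl i) a * v i (e a)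
          = ∑ σ : Equiv.Perm _, w σ * v i (e (σ (Sum.inl i))) := by
        intro i
        calc ∑ a, M (Sum.inl i) a * v i (e a)
            = ∑ a, ∑ σ : Equiv.Perm _, w σ *
              (if σ (Sum.inl i) = a then 1 else 0) * v i (e a) := by
              refine Finset.sum_congr rfl fun a _ => ?_
              rw [hMentry (Sum.inl i) a, Finset.sum_mul]
          _ = ∑ σ : Equiv.Perm _, ∑ a, w σ *
              (if σ (Sum.inl i) = a then 1 else 0) * v i (e a) :=
              Finset.sum_comm
          _ = ∑ σ : Equiv.Perm _, w σ * v i (e (σ (Sum.inl i))) := by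
              refine Finset.sum_congr rfl fun σ _ => ?_
              rw [Finset.sum_eq_single (σ (Sum.inl i))]
              · simp
              · intro a _ ha
                have : ¬ (σ (Sum.inl i) = a) := fun h => ha h.symm
                simp [this]
              · simp
      rw [Finset.sum_congr rfl fun i _ => h2 i, Finset.sum_comm]
      simp [hf, Finset.mul_sum]
    have lhs_eq2 : ∑ i : Fin n, ∑ a, M (Sum.inl i) a * v i (e a)
        = (1 / (n : ℝ)) * ∑ i, ∑ g ∈ G i, v i g := by
      rw [Finset.mul_sum]
      refine Finset.sum_congr rfl fun i _ => ?_
      have h1 := Fintype.sum_equiv e (fun a => M (Sum.inl i) a * v i (e a))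
        (fun g => if g ∈ G i then (1/(n:ℝ)) * v i g else 0)
        (fun a => by
          show (if e a ∈ G i then 1/(n:ℝ) else 0) * v i (e a) = _
          split <;> simp [*])
      rw [h1]
      simp only [Finset.sum_ite_mem, univ_inter]
      rw [Finset.mul_sum]
    rw [← lhs_eq, lhs_eq2]
  -- pick the best permutation
  obtain ⟨σ0, -, hσ0⟩ := Finset.exists_max_image
    (univ : Finset (Equiv.Perm (Fin n ⊕ Fin k))) f ⟨1, mem_univ 1⟩
  have hT : (1 / (n : ℝ)) * ∑ i, ∑ g ∈ G i, v i g ≤ f σ0 := by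
    rw [← key]
    calc ∑ σ, w σ * f σ ≤ ∑ σ, w σ * f σ0 := by
          exact Finset.sum_le_sum fun σ _ =>
            mul_le_mul_of_nonneg_left (hσ0 σ (mem_univ σ)) (hw0 σ)
      _ = f σ0 := by rw [← Finset.sum_mul, hw1, one_mul]
  refine ⟨fun i => e (σ0 (Sum.inl i)), ?_, hT⟩
  intro i j hij
  exact Sum.inl_injective (σ0.injective (e.injective hij))
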